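/- Let n ∈ ℕ, N = 2^n, let H be an N×N upper-triangular matrix over 𝔽₂ (i.e., H_{m,j} = 0 whenever m > j), and let 𝒜ᶜ ⊆ {0,…,N−1}. Suppose u ∈ 𝔽₂^N satisfies u·H = 0. Fix i ∈ {0,…,N−1} and t ∈ {1,…,n}, and set x_i^{(t)} = u_{𝒯(i,t)}·F^{⊗t} ∈ 𝔽₂^{2^t}, where u_{𝒯(i,t)} is the subvector of u with indices in 𝒯(i,t). Then u_0^{i−1}·H_{0:i−1, ℒ_{i,t}} + x_i^{(t)}·Q^{(i,t)} = 0 over 𝔽₂, where Q^{(i,t)} = (F^{⊗t})_{*, −s(i,t)+𝒯'(i,t)}·H_{𝒯'(i,t), ℒ_{i,t}} and −s(i,t)+𝒯'(i,t) = {k − s(i,t) : k ∈ 𝒯'(i,t)}. -/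
import Mathlib


open Matrix Finset

/-- The 2×2 polarization kernel `F = [[1,0],[1,1]]` over `𝔽₂`. -/
def polarF : Matrix (Fin 2) (Fin 2) (ZMod 2) := !![1, 0; 1, 1]

/-- The `n`-th Kronecker power `F^{⊗n}` of the polarization kernel, a `2^n × 2^n`
matrix over `𝔽₂`. -/
def kronPow : (n : ℕ) → Matrix (Fin (2 ^ n)) (Fin (2 ^ n)) (ZMod 2)
  | 0 => 1
  | n + 1 =>
      Matrix.reindex (finProdFinEquiv.trans (finCongr (by ring)))
        (finProdFinEquiv.trans (finCongr (by ring)))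
        (Matrix.kroneckerMap (· * ·) polarF (kronPow n))

/-- `s(i,t) = 2^t·⌊i/2^t⌋`, the first index of the length-`2^t` subgraph
containing position `i`. -/
def sIdx (i t : ℕ) : ℕ := 2 ^ t * (i / 2 ^ t)

/-- The `k`-th element of the index set `𝒯(i,t) = {s(i,t),…,s(i,t)+2^t−1}`,
as an element of `Fin (2^n)` (requires `t ≤ n`). -/
def subIdx (n t : ℕ) (ht : t ≤ n) (i : Fin (2 ^ n)) (k : Fin (2 ^ t)) : Fin (2 ^ n) :=
  ⟨sIdx (i : ℕ) t + (k : ℕ), by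
    have hk := k.isLt
    have h1 : (i : ℕ) / 2 ^ t < 2 ^ n / 2 ^ t :=
      Nat.div_lt_div_of_lt_of_dvd (pow_dvd_pow 2 ht) i.isLt
    have h2 : 2 ^ t * ((i : ℕ) / 2 ^ t + 1) ≤ 2 ^ t * (2 ^ n / 2 ^ t) :=
      Nat.mul_le_mul_left _ h1
    have h3 : 2 ^ t * (2 ^ n / 2 ^ t) = 2 ^ n :=
      Nat.mul_div_cancel' (pow_dvd_pow 2 ht)
    have h4 : 2 ^ t * ((i : ℕ) / 2 ^ t + 1) = 2 ^ t * ((i : ℕ) / 2 ^ t) + 2 ^ t := by ring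
    simp only [sIdx]
    omega⟩

lemma polarF_sq : polarF * polarF = 1 := by decide

lemma kronPow_sq : ∀ t, kronPow t * kronPow t = 1 := by
  intro t
  induction t with
  | zero => simp [kronPow]
  | succ n ih =>
    show kronPow (n+1) * kronPow (n+1) = 1
    unfold kronPow
    rw [Matrix.reindex_apply, Matrix.submatrix_mul_equiv,
      ← Matrix.mul_kronecker_mul, polarF_sq, ih, Matrix.one_kronecker_one,
      Matrix.submatrix_one_equiv]

/-- **Theorem 3 (subgraph-based FC conversion).**  Let `N = 2^n`, let `H` be an
`N × N` upper-triangular matrix over `𝔽₂`, and `Ac ⊆ {0,…,N−1}` the constrained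
positions.  Suppose `u·H = 0`.  Fix `i` and `t ∈ {1,…,n}`, and let
`x_i^{(t)} = u_{𝒯(i,t)}·F^{⊗t}` (the subvector of `u` on `𝒯(i,t)`, encoded by the
length-`2^t` polar kernel power).  Then for every `j ∈ ℒ_{i,t}`, i.e. every
`j ∈ Ac` with `j ≥ i`, `j ∈ 𝒯(i,t)` and `j ∉ 𝒯(i,t−1)`:
`(u_0^{i−1}·H_{0:i−1,ℒ_{i,t}})_j + (x_i^{(t)}·Q^{(i,t)})_j = 0`, where
`Q^{(i,t)} = (F^{⊗t})_{*,−s(i,t)+𝒯'(i,t)}·H_{𝒯'(i,t),ℒ_{i,t}}` and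
`𝒯'(i,t) = 𝒯(i,t) ∩ {i,…,N−1}`; entrywise the `j`-th coordinate reads
`Σ_{k<i} u_k·H_{k,j} + Σ_{m<2^t} x_i^{(t)}_m · (Σ_{k'<2^t, s(i,t)+k' ≥ i}
(F^{⊗t})_{m,k'}·H_{s(i,t)+k',j}) = 0`. -/
theorem subgraph_FC_conversion (n : ℕ) (H : Matrix (Fin (2 ^ n)) (Fin (2 ^ n)) (ZMod 2))
    (hH : ∀ m j : Fin (2 ^ n), (j : ℕ) < (m : ℕ) → H m j = 0)
    (Ac : Finset (Fin (2 ^ n)))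
    (u : Fin (2 ^ n) → ZMod 2) (hu : Matrix.vecMul u H = 0)
    (i : Fin (2 ^ n)) (t : ℕ) (ht1 : 1 ≤ t) (htn : t ≤ n)
    (xt : Fin (2 ^ t) → ZMod 2)
    (hxt : xt = Matrix.vecMul (fun k => u (subIdx n t htn i k)) (kronPow t)) :
    ∀ j : Fin (2 ^ n), j ∈ Ac → (i : ℕ) ≤ (j : ℕ) →
      (sIdx (i : ℕ) t ≤ (j : ℕ) ∧ (j : ℕ) < sIdx (i : ℕ) t + 2 ^ t) →
      ¬(sIdx (i : ℕ) (t - 1) ≤ (j : ℕ) ∧ (j : ℕ) < sIdx (i : ℕ) (t - 1) + 2 ^ (t - 1)) →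
      (∑ k ∈ Finset.univ.filter (fun k : Fin (2 ^ n) => (k : ℕ) < (i : ℕ)), u k * H k j)
        + (∑ m : Fin (2 ^ t), xt m *
            ∑ k ∈ Finset.univ.filter
                (fun k : Fin (2 ^ t) => (i : ℕ) ≤ (subIdx n t htn i k : ℕ)),
              kronPow t m k * H (subIdx n t htn i k) j) = 0 := by

  intro j hjAc hij hT _
  obtain ⟨hsj, hjs⟩ := hT
  have hdm := Nat.div_add_mod (i : ℕ) (2 ^ t)
  have hml : (i : ℕ) % 2 ^ t < 2 ^ t := Nat.mod_lt _ (pow_pos two_pos t)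
  have hsle : sIdx (i : ℕ) t ≤ (i : ℕ) := by unfold sIdx; omega
  have hilt : (i : ℕ) < sIdx (i : ℕ) t + 2 ^ t := by unfold sIdx; omega
  have hsub : ∀ k : Fin (2 ^ t), ((subIdx n t htn i k : Fin (2 ^ n)) : ℕ) = sIdx (i : ℕ) t + (k : ℕ) := by
    intro k; rfl
  have hx2 : Matrix.vecMul xt (kronPow t) = fun k => u (subIdx n t htn i k) := by
    rw [hxt, Matrix.vecMul_vecMul, kronPow_sq, Matrix.vecMul_one]
  -- rewrite the second sum
  have hswap : (∑ m : Fin (2 ^ t), xt m *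
        ∑ k ∈ Finset.univ.filter
            (fun k : Fin (2 ^ t) => (i : ℕ) ≤ (subIdx n t htn i k : ℕ)),
          kronPow t m k * H (subIdx n t htn i k) j)
      = ∑ k ∈ Finset.univ.filter
            (fun k : Fin (2 ^ t) => (i : ℕ) ≤ (subIdx n t htn i k : ℕ)),
          u (subIdx n t htn i k) * H (subIdx n t htn i k) j := by
    simp_rw [Finset.mul_sum]
    rw [Finset.sum_comm]
    refine Finset.sum_congr rfl fun k hk => ?_
    have : ∑ m : Fin (2 ^ t), xt m * (kronPow t m k * H (subIdx n t htn i k) j)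
        = (∑ m : Fin (2 ^ t), xt m * kronPow t m k) * H (subIdx n t htn i k) j := by
      rw [Finset.sum_mul]; exact Finset.sum_congr rfl fun m _ => (mul_assoc _ _ _).symm
    rw [this]
    have : (∑ m : Fin (2 ^ t), xt m * kronPow t m k) = Matrix.vecMul xt (kronPow t) k := rfl
    rw [this, hx2]
  rw [hswap]
  -- the full sum is zero
  have hfull : (∑ k : Fin (2 ^ n), u k * H k j) = 0 := by
    have := congrFun hu j
    simpa [Matrix.vecMul, dotProduct] using this
  rw [← hfull, ← Finset.sum_filter_add_sum_filter_not Finset.univ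
      (fun k : Fin (2 ^ n) => (k : ℕ) < (i : ℕ)) (fun k => u k * H k j)]
  congr 1
  -- now: sum over k' in Fin 2^t with i ≤ s + k' equals sum over k in Fin 2^n with ¬ k < i
  have hright : (∑ k ∈ Finset.univ.filter (fun k : Fin (2 ^ n) => ¬ (k : ℕ) < (i : ℕ)), u k * H k j)
      = ∑ k ∈ Finset.univ.filter
          (fun k : Fin (2 ^ n) => (i : ℕ) ≤ (k : ℕ) ∧ (k : ℕ) < sIdx (i : ℕ) t + 2 ^ t),
          u k * H k j := by
    symm
    apply Finset.sum_subset
    · intro k hk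
      simp only [Finset.mem_filter, Finset.mem_univ, true_and] at hk ⊢
      omega
    · intro k hk hnk
      simp only [Finset.mem_filter, Finset.mem_univ, true_and, not_and, not_lt] at hk hnk
      have hbig : sIdx (i : ℕ) t + 2 ^ t ≤ (k : ℕ) := hnk (by omega)
      have : H k j = 0 := hH k j (by omega)
      rw [this, mul_zero]
  rw [hright]
  refine Finset.sum_nbij' (fun k => subIdx n t htn i k)
    (fun k => (⟨((k : ℕ) - sIdx (i : ℕ) t) % 2 ^ t,
      Nat.mod_lt _ (pow_pos two_pos t)⟩ : Fin (2 ^ t))) ?_ ?_ ?_ ?_ ?_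
  · intro a ha
    simp only [Finset.mem_filter, Finset.mem_univ, true_and, hsub] at ha ⊢
    exact ⟨ha, by have := a.isLt; omega⟩
  · intro a ha
    simp only [Finset.mem_filter, Finset.mem_univ, true_and, hsub] at ha ⊢
    obtain ⟨h1, h2⟩ := ha
    have : ((a : ℕ) - sIdx (i : ℕ) t) % 2 ^ t = (a : ℕ) - sIdx (i : ℕ) t :=
      Nat.mod_eq_of_lt (by omega)
    rw [this]; omega
  · intro a ha
    apply Fin.ext
    simp only [hsub]
    have := a.isLt
    simp [Nat.add_sub_cancel_left, Nat.mod_eq_of_lt this]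
  · intro a ha
    simp only [Finset.mem_filter, Finset.mem_univ, true_and] at ha
    obtain ⟨h1, h2⟩ := ha
    apply Fin.ext
    simp only [hsub]
    have : ((a : ℕ) - sIdx (i : ℕ) t) % 2 ^ t = (a : ℕ) - sIdx (i : ℕ) t :=
      Nat.mod_eq_of_lt (by omega)
    rw [this]; omega
  · intro a ha; rfl
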